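/- Let 𝒩 be a nest on a separable complex Hilbert space H, let Q ∈ 𝒩 with Q ≠ {0} and Q_- = Q, and let a ∈ Alg 𝒩 and ε > 0 satisfy ‖Q P^⊥ a Q P^⊥‖ ≥ 2ε for all P ∈ 𝒩 with P < Q. Let (R_n) be a strictly increasing sequence in 𝒩 with R_n < Q for all n that converges to Q in the strong operator topology, and fix j ∈ ℕ. Then there exist m > j and a unit vector f ∈ R_m with f orthogonal to R_j such that ‖R_m R_j^⊥ a R_m R_j^⊥ f‖ ≥ ε. -/

import Mathlib

open scoped InnerProductSpace

set_option synthInstance.maxHeartbeats 1000000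
set_option maxHeartbeats 1000000

/-- A nest on a complex Hilbert space `H`: a family of closed subspaces, totally ordered by
inclusion, containing `{0}` and `H`, closed under intersections and closed linear spans. -/
structure Nest (H : Type*) [NormedAddCommGroup H] [InnerProductSpace ℂ H]
    [CompleteSpace H] where
  carrier : Set (Submodule ℂ H)
  isClosed : ∀ N ∈ carrier, IsClosed (N : Set H)
  total : ∀ N ∈ carrier, ∀ M ∈ carrier, N ≤ M ∨ M ≤ N
  bot_mem : ⊥ ∈ carrier
  top_mem : ⊤ ∈ carrier
  sInf_mem : ∀ S ⊆ carrier, S.Nonempty → sInf S ∈ carrier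
  closedSpan_mem : ∀ S ⊆ carrier, S.Nonempty → (sSup S).topologicalClosure ∈ carrier

variable {H : Type*} [NormedAddCommGroup H] [InnerProductSpace ℂ H] [CompleteSpace H]

/-- The orthogonal projection onto a closed subspace, as an operator `H →L[ℂ] H`. -/
noncomputable def subProj (N : Submodule ℂ H) (hN : IsClosed (N : Set H)) : H →L[ℂ] H :=
  haveI : CompleteSpace N := hN.completeSpace_coe
  N.subtypeL ∘L N.orthogonalProjectionOnto

/-- The orthogonal projection onto an element of a nest. -/
noncomputable def Nest.proj (𝒩 : Nest H) (N : Submodule ℂ H) (hN : N ∈ 𝒩.carrier) :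
    H →L[ℂ] H :=
  subProj N (𝒩.isClosed N hN)

/-- The nest algebra of all bounded operators leaving every element of the nest invariant. -/
def nestAlgebra (𝒩 : Nest H) : Subalgebra ℂ (H →L[ℂ] H) where
  carrier := {T | ∀ N ∈ 𝒩.carrier, ∀ x ∈ N, T x ∈ N}
  mul_mem' := fun hT hS N hN x hx => hT N hN _ (hS N hN x hx)
  one_mem' := fun N _ x hx => hx
  add_mem' := fun hT hS N hN x hx => N.add_mem (hT N hN x hx) (hS N hN x hx)
  algebraMap_mem' := fun r N _ x hx => by
    simpa [Algebra.algebraMap_eq_smul_one] using N.smul_mem r hx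

/-- `Q₋`: the closed span of the elements of the nest strictly below `Q`. -/
def Nest.pred (𝒩 : Nest H) (Q : Submodule ℂ H) : Submodule ℂ H :=
  (sSup {P | P ∈ 𝒩.carrier ∧ P < Q}).topologicalClosure

/-- `Q₊`: the intersection of the elements of the nest strictly above `Q`. -/
def Nest.succ (𝒩 : Nest H) (Q : Submodule ℂ H) : Submodule ℂ H :=
  sInf {P | P ∈ 𝒩.carrier ∧ Q < P}

/-- The projection onto `Q₋`. -/
noncomputable def Nest.predProj (𝒩 : Nest H) (Q : Submodule ℂ H) : H →L[ℂ] H :=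
  subProj (𝒩.pred Q) (Submodule.isClosed_topologicalClosure _)

/-- The rank one operator `e ⊗ f : h ↦ ⟨h, e⟩ f` (inner product linear in `h`). -/
noncomputable def rankOne (e f : H) : H →L[ℂ] H :=
  (ContinuousLinearMap.toSpanSingleton ℂ f).comp (innerSL ℂ e)

/-- The Jacobson radical of the nest algebra, viewed as a set of operators on `H`. -/
def nestRadical (𝒩 : Nest H) : Set (H →L[ℂ] H) :=
  (fun a : nestAlgebra 𝒩 => (a : H →L[ℂ] H)) ''
    {a | a ∈ (⊥ : TwoSidedIdeal (nestAlgebra 𝒩)).jacobson}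

/-- `K(𝒩)`: the compact operators belonging to the nest algebra. -/
def nestCompacts (𝒩 : Nest H) : Set (H →L[ℂ] H) :=
  {T | T ∈ nestAlgebra 𝒩 ∧ IsCompactOperator T}

/-- `K(𝒩) + Rad(Alg 𝒩)` as a set of operators. -/
def nestKplusRad (𝒩 : Nest H) : Set (H →L[ℂ] H) :=
  {T | ∃ k ∈ nestCompacts 𝒩, ∃ r ∈ nestRadical 𝒩, T = k + r}

lemma subProj_apply_mem (N : Submodule ℂ H) (hN : IsClosed (N : Set H)) (x : H) :
    subProj N hN x ∈ N := by
  haveI : CompleteSpace N := hN.completeSpace_coe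
  exact (N.orthogonalProjectionOnto x).2

lemma subProj_eq_self (N : Submodule ℂ H) (hN : IsClosed (N : Set H)) {x : H} (hx : x ∈ N) :
    subProj N hN x = x := by
  haveI : CompleteSpace N := hN.completeSpace_coe
  exact Submodule.starProjection_eq_self_iff.2 hx

lemma norm_subProj_le (N : Submodule ℂ H) (hN : IsClosed (N : Set H)) (x : H) :
    ‖subProj N hN x‖ ≤ ‖x‖ := by
  haveI : CompleteSpace N := hN.completeSpace_coe
  calc ‖subProj N hN x‖ = ‖N.orthogonalProjectionOnto x‖ := rfl
    _ ≤ ‖N.orthogonalProjectionOnto‖ * ‖x‖ := (N.orthogonalProjectionOnto).le_opNorm x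
    _ ≤ 1 * ‖x‖ := mul_le_mul_of_nonneg_right (Submodule.orthogonalProjectionOnto_norm_le N) (norm_nonneg x)
    _ = ‖x‖ := one_mul _

lemma subProj_subProj_of_le {P N : Submodule ℂ H} (hP : IsClosed (P : Set H))
    (hN : IsClosed (N : Set H)) (h : P ≤ N) (x : H) :
    subProj P hP (subProj N hN x) = subProj P hP x := by
  haveI : CompleteSpace P := hP.completeSpace_coe
  haveI : CompleteSpace N := hN.completeSpace_coe
  have h2 := Submodule.orthogonalProjectionOnto_starProjection_of_le h x
  calc subProj P hP (subProj N hN x)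
      = (P.orthogonalProjectionOnto ((N.orthogonalProjectionOnto x : H)) : H) := rfl
    _ = (P.orthogonalProjectionOnto x : H) := congrArg Subtype.val h2

lemma sub_subProj_mem_orthogonal' (P : Submodule ℂ H) (hP : IsClosed (P : Set H)) (x : H) :
    x - subProj P hP x ∈ Pᗮ := by
  haveI : CompleteSpace P := hP.completeSpace_coe
  exact Submodule.sub_starProjection_mem_orthogonal (K := P) x

/-- The one-step selection in the proof of Lemma `cont`: given `R_j` one can find `m > j` and a
unit vector `f ∈ R_m ⊖ R_j` with `‖R_m R_j^⊥ a R_m R_j^⊥ f‖ ≥ ε`. -/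
theorem nest_cont_step [TopologicalSpace.SeparableSpace H] (𝒩 : Nest H)
    (Q : Submodule ℂ H) (hQ : Q ∈ 𝒩.carrier) (hQbot : Q ≠ ⊥) (hQpred : 𝒩.pred Q = Q)
    (a : H →L[ℂ] H) (ha : a ∈ nestAlgebra 𝒩) (ε : ℝ) (hε : 0 < ε)
    (hna : ∀ P, ∀ hP : P ∈ 𝒩.carrier, P < Q →
      2 * ε ≤ ‖(𝒩.proj Q hQ * (1 - 𝒩.proj P hP)) * a * (𝒩.proj Q hQ * (1 - 𝒩.proj P hP))‖)
    (R : ℕ → Submodule ℂ H) (hR : ∀ n, R n ∈ 𝒩.carrier)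
    (hmono : StrictMono R) (hRQ : ∀ n, R n < Q)
    (hsot : ∀ h : H, Filter.Tendsto (fun n => 𝒩.proj (R n) (hR n) h) Filter.atTop
      (nhds (𝒩.proj Q hQ h)))
    (j : ℕ) :
    ∃ m, j < m ∧ ∃ f : H, f ∈ R m ∧ ‖f‖ = 1 ∧ (∀ g ∈ R j, ⟪g, f⟫_ℂ = 0) ∧
      ε ≤ ‖((𝒩.proj (R m) (hR m) * (1 - 𝒩.proj (R j) (hR j))) * a *
          (𝒩.proj (R m) (hR m) * (1 - 𝒩.proj (R j) (hR j)))) f‖ := by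
  classical
  have hjQle : R j ≤ Q := (hRQ j).le
  have hQmem : ∀ z, 𝒩.proj Q hQ z ∈ Q := fun z => subProj_apply_mem Q (𝒩.isClosed Q hQ) z
  have hRmem : ∀ n z, 𝒩.proj (R n) (hR n) z ∈ R n := fun n z =>
    subProj_apply_mem (R n) (𝒩.isClosed (R n) (hR n)) z
  have hQself : ∀ z, z ∈ Q → 𝒩.proj Q hQ z = z := fun z hz =>
    subProj_eq_self Q (𝒩.isClosed Q hQ) hz
  have hRself : ∀ n, ∀ z, z ∈ R n → 𝒩.proj (R n) (hR n) z = z := fun n z hz =>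
    subProj_eq_self (R n) (𝒩.isClosed (R n) (hR n)) hz
  have hPQ : ∀ z, 𝒩.proj (R j) (hR j) (𝒩.proj Q hQ z) = 𝒩.proj (R j) (hR j) z :=
    fun z => subProj_subProj_of_le (𝒩.isClosed (R j) (hR j)) (𝒩.isClosed Q hQ) hjQle z
  have hPR : ∀ n, j ≤ n → ∀ z,
      𝒩.proj (R j) (hR j) (𝒩.proj (R n) (hR n) z) = 𝒩.proj (R j) (hR j) z :=
    fun n hn z => subProj_subProj_of_le (𝒩.isClosed (R j) (hR j)) (𝒩.isClosed (R n) (hR n))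
      (hmono.monotone hn) z
  -- Step 1: find x with ‖T x‖ > (3/2) ε
  have hT := hna (R j) (hR j) (hRQ j)
  obtain ⟨x, hx1, hx2⟩ :=
    ContinuousLinearMap.exists_lt_apply_of_lt_opNorm
      ((𝒩.proj Q hQ * (1 - 𝒩.proj (R j) (hR j))) * a *
        (𝒩.proj Q hQ * (1 - 𝒩.proj (R j) (hR j))))
      (lt_of_lt_of_le (by nlinarith : 3/2 * ε < 2 * ε) hT)
  set x' : H := (𝒩.proj Q hQ * (1 - 𝒩.proj (R j) (hR j))) x with hx'def
  have happ : ∀ (B : H →L[ℂ] H) (z : H),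
      ((𝒩.proj Q hQ * (1 - 𝒩.proj (R j) (hR j))) * a *
        (𝒩.proj Q hQ * (1 - 𝒩.proj (R j) (hR j)))) z
        = (𝒩.proj Q hQ * (1 - 𝒩.proj (R j) (hR j)))
            (a ((𝒩.proj Q hQ * (1 - 𝒩.proj (R j) (hR j))) z)) := fun _ _ => rfl
  have hmul : ∀ z : H, (𝒩.proj Q hQ * (1 - 𝒩.proj (R j) (hR j))) z
      = 𝒩.proj Q hQ (z - 𝒩.proj (R j) (hR j) z) := fun _ => rfl
  have hx'Q : x' ∈ Q := by rw [hx'def, hmul]; exact hQmem _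
  have hPjx' : 𝒩.proj (R j) (hR j) x' = 0 := by
    rw [hx'def, hmul, hPQ, map_sub, hRself j _ (hRmem j x), sub_self]
  have hx'orth : x' ∈ (R j)ᗮ := by
    have h : x' - 𝒩.proj (R j) (hR j) x' ∈ (R j)ᗮ :=
      sub_subProj_mem_orthogonal' (R j) (𝒩.isClosed (R j) (hR j)) x'
    rwa [hPjx', sub_zero] at h
  have hEx' : (𝒩.proj Q hQ * (1 - 𝒩.proj (R j) (hR j))) x' = x' := by
    rw [hmul, hPjx', sub_zero]; exact hQself _ hx'Q
  have hTx'eq : ∀ B : H →L[ℂ] H, True := fun _ => trivial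
  have hTx' : ((𝒩.proj Q hQ * (1 - 𝒩.proj (R j) (hR j))) * a *
        (𝒩.proj Q hQ * (1 - 𝒩.proj (R j) (hR j)))) x'
      = ((𝒩.proj Q hQ * (1 - 𝒩.proj (R j) (hR j))) * a *
        (𝒩.proj Q hQ * (1 - 𝒩.proj (R j) (hR j)))) x := by
    rw [happ a x', happ a x, hEx', ← hx'def]
  have hTx'norm : 3/2 * ε < ‖((𝒩.proj Q hQ * (1 - 𝒩.proj (R j) (hR j))) * a *
        (𝒩.proj Q hQ * (1 - 𝒩.proj (R j) (hR j)))) x'‖ := by rw [hTx']; exact hx2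
  have hx'ne : x' ≠ 0 := by
    intro h
    rw [h, map_zero, norm_zero] at hTx'norm
    nlinarith
  have hx'le : ‖x'‖ ≤ 1 := by
    have h1 : ‖x'‖ ≤ ‖x - 𝒩.proj (R j) (hR j) x‖ := by
      rw [hx'def, hmul]
      exact norm_subProj_le Q (𝒩.isClosed Q hQ) _
    have horth : ⟪x - 𝒩.proj (R j) (hR j) x, 𝒩.proj (R j) (hR j) x⟫_ℂ = 0 := by
      have hmem : x - 𝒩.proj (R j) (hR j) x ∈ (R j)ᗮ :=
        sub_subProj_mem_orthogonal' (R j) (𝒩.isClosed (R j) (hR j)) x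
      exact (Submodule.mem_orthogonal' _ _).1 hmem _ (hRmem j x)
    have hpy := norm_add_sq_eq_norm_sq_add_norm_sq_of_inner_eq_zero
      (x - 𝒩.proj (R j) (hR j) x) (𝒩.proj (R j) (hR j) x) horth
    rw [sub_add_cancel] at hpy
    have h2 : ‖x - 𝒩.proj (R j) (hR j) x‖ ≤ ‖x‖ := by
      nlinarith [norm_nonneg (𝒩.proj (R j) (hR j) x),
        norm_nonneg (x - 𝒩.proj (R j) (hR j) x), norm_nonneg x]
    linarith [le_of_lt hx1]
  -- Step 2: convergence
  have hy_tend : Filter.Tendsto (fun m => 𝒩.proj (R m) (hR m) x') Filter.atTop (nhds x') := by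
    have h := hsot x'
    rwa [hQself x' hx'Q] at h
  have h_a : Filter.Tendsto (fun m => a (𝒩.proj (R m) (hR m) x')) Filter.atTop
      (nhds (a x')) := (a.continuous.tendsto x').comp hy_tend
  have h_Pj : Filter.Tendsto (fun m => 𝒩.proj (R j) (hR j) (a (𝒩.proj (R m) (hR m) x')))
      Filter.atTop (nhds (𝒩.proj (R j) (hR j) (a x'))) :=
    ((𝒩.proj (R j) (hR j)).continuous.tendsto _).comp h_a
  have h_diff0 : Filter.Tendsto (fun m => 𝒩.proj (R m) (hR m) (a (𝒩.proj (R m) (hR m) x'))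
      - 𝒩.proj (R m) (hR m) (a x')) Filter.atTop (nhds 0) := by
    rw [tendsto_zero_iff_norm_tendsto_zero]
    have hb : ∀ m, ‖𝒩.proj (R m) (hR m) (a (𝒩.proj (R m) (hR m) x'))
        - 𝒩.proj (R m) (hR m) (a x')‖ ≤ ‖a (𝒩.proj (R m) (hR m) x') - a x'‖ := by
      intro m
      rw [← map_sub]
      exact norm_subProj_le (R m) (𝒩.isClosed (R m) (hR m)) _
    have hA0 : Filter.Tendsto (fun m => ‖a (𝒩.proj (R m) (hR m) x') - a x'‖)
        Filter.atTop (nhds 0) := by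
      have h := (h_a.sub (tendsto_const_nhds (x := a x'))).norm
      simpa using h
    exact squeeze_zero (fun m => norm_nonneg _) hb hA0
  have h_Rm : Filter.Tendsto (fun m => 𝒩.proj (R m) (hR m) (a (𝒩.proj (R m) (hR m) x')))
      Filter.atTop (nhds (𝒩.proj Q hQ (a x'))) := by
    have h := h_diff0.add (hsot (a x'))
    rw [zero_add] at h
    have heq : (fun m => (𝒩.proj (R m) (hR m) (a (𝒩.proj (R m) (hR m) x'))
        - 𝒩.proj (R m) (hR m) (a x')) + 𝒩.proj (R m) (hR m) (a x'))
        = fun m => 𝒩.proj (R m) (hR m) (a (𝒩.proj (R m) (hR m) x')) := by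
      funext m; abel
    rwa [heq] at h
  -- value of T at x'
  have hTalt : ((𝒩.proj Q hQ * (1 - 𝒩.proj (R j) (hR j))) * a *
        (𝒩.proj Q hQ * (1 - 𝒩.proj (R j) (hR j)))) x'
      = 𝒩.proj Q hQ (a x') - 𝒩.proj (R j) (hR j) (a x') := by
    rw [happ a x', hEx', hmul, map_sub, hQself _ (hjQle (hRmem j (a x')))]
  -- pointwise values of S m at x'
  have hSx' : ∀ m, j ≤ m →
      ((𝒩.proj (R m) (hR m) * (1 - 𝒩.proj (R j) (hR j))) * a *
        (𝒩.proj (R m) (hR m) * (1 - 𝒩.proj (R j) (hR j)))) x'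
      = 𝒩.proj (R m) (hR m) (a (𝒩.proj (R m) (hR m) x'))
        - 𝒩.proj (R j) (hR j) (a (𝒩.proj (R m) (hR m) x')) := by
    intro m hm
    have happm : ∀ z : H, ((𝒩.proj (R m) (hR m) * (1 - 𝒩.proj (R j) (hR j))) * a *
        (𝒩.proj (R m) (hR m) * (1 - 𝒩.proj (R j) (hR j)))) z
        = (𝒩.proj (R m) (hR m) * (1 - 𝒩.proj (R j) (hR j)))
            (a ((𝒩.proj (R m) (hR m) * (1 - 𝒩.proj (R j) (hR j))) z)) := fun _ => rfl
    have hmulm : ∀ z : H, (𝒩.proj (R m) (hR m) * (1 - 𝒩.proj (R j) (hR j))) z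
        = 𝒩.proj (R m) (hR m) (z - 𝒩.proj (R j) (hR j) z) := fun _ => rfl
    have hEmx' : (𝒩.proj (R m) (hR m) * (1 - 𝒩.proj (R j) (hR j))) x'
        = 𝒩.proj (R m) (hR m) x' := by rw [hmulm, hPjx', sub_zero]
    rw [happm, hEmx', hmulm, map_sub, hRself m _ (hmono.monotone hm (hRmem j _))]
  have hS_tend : Filter.Tendsto (fun m =>
      ((𝒩.proj (R m) (hR m) * (1 - 𝒩.proj (R j) (hR j))) * a *
        (𝒩.proj (R m) (hR m) * (1 - 𝒩.proj (R j) (hR j)))) x') Filter.atTop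
      (nhds (((𝒩.proj Q hQ * (1 - 𝒩.proj (R j) (hR j))) * a *
        (𝒩.proj Q hQ * (1 - 𝒩.proj (R j) (hR j)))) x')) := by
    rw [hTalt]
    refine (h_Rm.sub h_Pj).congr' ?_
    filter_upwards [Filter.eventually_ge_atTop j] with m hm
    exact (hSx' m hm).symm
  -- Step 3: choose m
  have hε1 : ∀ᶠ m in Filter.atTop, ε < ‖((𝒩.proj (R m) (hR m) * (1 - 𝒩.proj (R j) (hR j))) * a *
        (𝒩.proj (R m) (hR m) * (1 - 𝒩.proj (R j) (hR j)))) x'‖ :=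
    hS_tend.norm.eventually (eventually_gt_nhds (by linarith))
  have hy_pos : ∀ᶠ m in Filter.atTop, 0 < ‖𝒩.proj (R m) (hR m) x'‖ :=
    hy_tend.norm.eventually (eventually_gt_nhds (norm_pos_iff.2 hx'ne))
  obtain ⟨m, hmj, hSm, hym⟩ := ((Filter.eventually_gt_atTop j).and (hε1.and hy_pos)).exists
  -- Step 4: build f
  have hymle : ‖𝒩.proj (R m) (hR m) x'‖ ≤ 1 :=
    le_trans (norm_subProj_le (R m) (𝒩.isClosed (R m) (hR m)) x') hx'le
  refine ⟨m, hmj, ((‖𝒩.proj (R m) (hR m) x'‖ : ℂ))⁻¹ • 𝒩.proj (R m) (hR m) x', ?_, ?_, ?_, ?_⟩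
  · exact Submodule.smul_mem _ _ (hRmem m x')
  · rw [norm_smul]
    have h1 : ‖((‖𝒩.proj (R m) (hR m) x'‖ : ℂ))⁻¹‖ = ‖𝒩.proj (R m) (hR m) x'‖⁻¹ := by
      rw [norm_inv]
      simp [abs_of_nonneg (norm_nonneg _)]
    rw [h1, inv_mul_cancel₀ (ne_of_gt hym)]
  · have h0 : 𝒩.proj (R j) (hR j) (𝒩.proj (R m) (hR m) x') = 0 := by
      rw [hPR m hmj.le x', hPjx']
    have hymem : 𝒩.proj (R m) (hR m) x' ∈ (R j)ᗮ := by
      have h : 𝒩.proj (R m) (hR m) x' - 𝒩.proj (R j) (hR j) (𝒩.proj (R m) (hR m) x') ∈ (R j)ᗮ :=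
        sub_subProj_mem_orthogonal' (R j) (𝒩.isClosed (R j) (hR j)) _
      rwa [h0, sub_zero] at h
    intro g hg
    exact (Submodule.mem_orthogonal _ _).1 (Submodule.smul_mem _ _ hymem) g hg
  · -- final norm estimate
    have hmulm : ∀ z : H, (𝒩.proj (R m) (hR m) * (1 - 𝒩.proj (R j) (hR j))) z
        = 𝒩.proj (R m) (hR m) (z - 𝒩.proj (R j) (hR j) z) := fun _ => rfl
    have happm : ∀ z : H, ((𝒩.proj (R m) (hR m) * (1 - 𝒩.proj (R j) (hR j))) * a *
        (𝒩.proj (R m) (hR m) * (1 - 𝒩.proj (R j) (hR j)))) z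
        = (𝒩.proj (R m) (hR m) * (1 - 𝒩.proj (R j) (hR j)))
            (a ((𝒩.proj (R m) (hR m) * (1 - 𝒩.proj (R j) (hR j))) z)) := fun _ => rfl
    have h0 : 𝒩.proj (R j) (hR j) (𝒩.proj (R m) (hR m) x') = 0 := by
      rw [hPR m hmj.le x', hPjx']
    have hEy : (𝒩.proj (R m) (hR m) * (1 - 𝒩.proj (R j) (hR j))) (𝒩.proj (R m) (hR m) x')
        = 𝒩.proj (R m) (hR m) x' := by
      rw [hmulm, h0, sub_zero]
      exact hRself m _ (hRmem m x')
    have hEmx' : (𝒩.proj (R m) (hR m) * (1 - 𝒩.proj (R j) (hR j))) x'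
        = 𝒩.proj (R m) (hR m) x' := by rw [hmulm, hPjx', sub_zero]
    have hSy : ((𝒩.proj (R m) (hR m) * (1 - 𝒩.proj (R j) (hR j))) * a *
        (𝒩.proj (R m) (hR m) * (1 - 𝒩.proj (R j) (hR j)))) (𝒩.proj (R m) (hR m) x')
        = ((𝒩.proj (R m) (hR m) * (1 - 𝒩.proj (R j) (hR j))) * a *
        (𝒩.proj (R m) (hR m) * (1 - 𝒩.proj (R j) (hR j)))) x' := by
      rw [happm, happm, hEy, hEmx']
    rw [map_smul, hSy, norm_smul]
    have h1 : ‖((‖𝒩.proj (R m) (hR m) x'‖ : ℂ))⁻¹‖ = ‖𝒩.proj (R m) (hR m) x'‖⁻¹ := by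
      rw [norm_inv]
      simp [abs_of_nonneg (norm_nonneg _)]
    rw [h1]
    have hinv : (1 : ℝ) ≤ ‖𝒩.proj (R m) (hR m) x'‖⁻¹ := by
      rw [le_inv_comm₀ one_pos hym]
      simpa using hymle
    calc ε ≤ ‖((𝒩.proj (R m) (hR m) * (1 - 𝒩.proj (R j) (hR j))) * a *
        (𝒩.proj (R m) (hR m) * (1 - 𝒩.proj (R j) (hR j)))) x'‖ := le_of_lt hSm
      _ ≤ ‖𝒩.proj (R m) (hR m) x'‖⁻¹ * ‖((𝒩.proj (R m) (hR m) * (1 - 𝒩.proj (R j) (hR j))) * a *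
        (𝒩.proj (R m) (hR m) * (1 - 𝒩.proj (R j) (hR j)))) x'‖ :=
        le_mul_of_one_le_left (norm_nonneg _) hinv
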